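/- Let b, n, d be natural numbers with n ≤ b. Let δ, L, U : Fin b → Fin d → ℝ be nominal per-sample gradients and their element-wise bounds with L i j ≤ δ i j ≤ U i j for all i, j, and let L̃, Ũ : Fin b → Fin d → ℝ be element-wise bounds capturing the combined effect of bounded perturbations, satisfying L̃ i j ≤ L i j and U i j ≤ Ũ i j for all i, j. Let δ̃ : Fin b → Fin d → ℝ be a perturbed family of per-sample gradients such that there exists a subset P ⊆ Fin b with |P| ≤ n, with L̃ i j ≤ δ̃ i j ≤ Ũ i j for i ∈ P and δ̃ i = δ i for i ∉ P. Then for every coordinate j : Fin d, (1/b) · (SEMin_n{L̃ i j − L i j}_{i=1}^{b} + ∑_{i=1}^{b} L i j) ≤ (1/b) · ∑_{i=1}^{b} δ̃ i j ≤ (1/b) · (SEMax_n{Ũ i j − U i j}_{i=1}^{b} + ∑_{i=1}^{b} U i j). (Theorem: descent direction bounds under bounded perturbation of up to n training samples.) -/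

import Mathlib

/-- `SEMin a k`: the sum of the `k` smallest elements of the family `a`
(counted with multiplicity). -/
noncomputable def SEMin {b : ℕ} (a : Fin b → ℝ) (k : ℕ) : ℝ :=
  (((List.ofFn a).mergeSort (· ≤ ·)).take k).sum

/-- `SEMax a k`: the sum of the `k` largest elements of the family `a`
(counted with multiplicity). -/
noncomputable def SEMax {b : ℕ} (a : Fin b → ℝ) (k : ℕ) : ℝ :=
  (((List.ofFn a).mergeSort (· ≥ ·)).take k).sum

private lemma list_sum_nonpos : ∀ {l : List ℝ}, (∀ x ∈ l, x ≤ 0) → l.sum ≤ 0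
  | [], _ => by simp
  | x :: t, h => by
    simp only [List.sum_cons]
    have := list_sum_nonpos (fun y hy => h y (List.mem_cons_of_mem _ hy))
    have := h x (List.mem_cons_self)
    linarith

private lemma list_sum_nonneg : ∀ {l : List ℝ}, (∀ x ∈ l, 0 ≤ x) → 0 ≤ l.sum
  | [], _ => by simp
  | x :: t, h => by
    simp only [List.sum_cons]
    have := list_sum_nonneg (fun y hy => h y (List.mem_cons_of_mem _ hy))
    have := h x (List.mem_cons_self)
    linarith

private lemma sorted_sum_take_le : ∀ {s l : List ℝ}, s.Sublist l → l.Pairwise (· ≤ ·) →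
    (l.take s.length).sum ≤ s.sum := by
  intro s l hs
  induction hs with
  | slnil => intro _; simp
  | @cons l₁ l₂ a h ih =>
    intro hl
    rcases l₁ with _ | ⟨x, t⟩
    · simp
    · have hm : t.length < l₂.length := h.length_le
      have h2 : (l₂.take (t.length + 1)).sum = (l₂.take t.length).sum + l₂[t.length] :=
        List.sum_take_succ _ _ hm
      have ha : a ≤ l₂[t.length] :=
        (List.pairwise_cons.mp hl).1 _ (l₂.getElem_mem hm)
      have ihh := ih (List.pairwise_cons.mp hl).2
      simp only [List.length_cons, List.take_succ_cons, List.sum_cons] at *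
      linarith
  | @cons_cons l₁ l₂ a h ih =>
    intro hl
    have ihh := ih (List.pairwise_cons.mp hl).2
    simp only [List.length_cons, List.take_succ_cons, List.sum_cons]
    linarith

private lemma sorted_sum_take_ge : ∀ {s l : List ℝ}, s.Sublist l → l.Pairwise (· ≥ ·) →
    s.sum ≤ (l.take s.length).sum := by
  intro s l hs
  induction hs with
  | slnil => intro _; simp
  | @cons l₁ l₂ a h ih =>
    intro hl
    rcases l₁ with _ | ⟨x, t⟩
    · simp
    · have hm : t.length < l₂.length := h.length_le
      have h2 : (l₂.take (t.length + 1)).sum = (l₂.take t.length).sum + l₂[t.length] :=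
        List.sum_take_succ _ _ hm
      have ha : l₂[t.length] ≤ a :=
        (List.pairwise_cons.mp hl).1 _ (l₂.getElem_mem hm)
      have ihh := ih (List.pairwise_cons.mp hl).2
      simp only [List.length_cons, List.take_succ_cons, List.sum_cons] at *
      linarith
  | @cons_cons l₁ l₂ a h ih =>
    intro hl
    have ihh := ih (List.pairwise_cons.mp hl).2
    simp only [List.length_cons, List.take_succ_cons, List.sum_cons]
    linarith

private lemma toList_map_subperm {b : ℕ} (a : Fin b → ℝ) (S : Finset (Fin b)) :
    List.Subperm (S.toList.map a) (List.ofFn a) := by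
  rw [List.ofFn_eq_map]
  obtain ⟨t, ht, hsub⟩ :=
    List.subperm_of_subset S.nodup_toList (fun x _ => List.mem_finRange x)
  exact ⟨t.map a, ht.map a, hsub.map a⟩

private lemma SEMin_le_sum_subset {b n : ℕ} (a : Fin b → ℝ) (ha : ∀ i, a i ≤ 0)
    (S : Finset (Fin b)) (hS : S.card ≤ n) :
    SEMin a n ≤ ∑ i ∈ S, a i := by
  classical
  set l := (List.ofFn a).mergeSort (· ≤ ·) with hldef
  have hsort : l.Pairwise (· ≤ ·) := List.pairwise_mergeSort' _ _
  have hperm : l.Perm (List.ofFn a) := List.mergeSort_perm _ _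
  set s0 := S.toList.map a with hs0def
  set s := s0.mergeSort (· ≤ ·) with hsdef
  have hs_sort : s.Pairwise (· ≤ ·) := List.pairwise_mergeSort' _ _
  have hs_perm : s.Perm s0 := List.mergeSort_perm _ _
  have hsub : s.Subperm l :=
    (hs_perm.subperm.trans (toList_map_subperm a S)).trans hperm.symm.subperm
  have hsl : s.Sublist l := List.sublist_of_subperm_of_pairwise hsub hs_sort hsort
  have hlen : s.length = S.card := by
    rw [hsdef, List.length_mergeSort, hs0def, List.length_map, Finset.length_toList]
  have hsum : s.sum = ∑ i ∈ S, a i := by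
    rw [hs_perm.sum_eq, hs0def, Finset.sum_map_toList]
  have h1 : (l.take S.card).sum ≤ ∑ i ∈ S, a i := by
    rw [← hsum, ← hlen]; exact sorted_sum_take_le hsl hsort
  have hne : ∀ x ∈ l, x ≤ 0 := by
    intro x hx
    obtain ⟨i, rfl⟩ := List.mem_ofFn.mp (hperm.subset hx)
    exact ha i
  have h2 : (l.take n).sum ≤ (l.take S.card).sum := by
    have hdec : n = S.card + (n - S.card) := by omega
    rw [hdec, List.take_add, List.sum_append]
    have : ((l.drop S.card).take (n - S.card)).sum ≤ 0 :=
      list_sum_nonpos fun x hx =>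
        hne x (List.mem_of_mem_drop (List.mem_of_mem_take hx))
    linarith
  exact le_trans h2 h1

private lemma sum_subset_le_SEMax {b n : ℕ} (a : Fin b → ℝ) (ha : ∀ i, 0 ≤ a i)
    (S : Finset (Fin b)) (hS : S.card ≤ n) :
    ∑ i ∈ S, a i ≤ SEMax a n := by
  classical
  set l := (List.ofFn a).mergeSort (· ≥ ·) with hldef
  have hsort : l.Pairwise (· ≥ ·) := by
    have := List.pairwise_mergeSort (le := fun x y : ℝ => decide (x ≥ y))
      (fun a b c h₁ h₂ => by
        simp only [decide_eq_true_eq] at *; exact le_trans h₂ h₁)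
      (fun a b => by simpa using le_total b a) (List.ofFn a)
    simpa using this
  have hperm : l.Perm (List.ofFn a) := List.mergeSort_perm _ _
  set s0 := S.toList.map a with hs0def
  set s := s0.mergeSort (· ≥ ·) with hsdef
  have hs_sort : s.Pairwise (· ≥ ·) := by
    have := List.pairwise_mergeSort (le := fun x y : ℝ => decide (x ≥ y))
      (fun a b c h₁ h₂ => by
        simp only [decide_eq_true_eq] at *; exact le_trans h₂ h₁)
      (fun a b => by simpa using le_total b a) s0
    simpa using this
  have hs_perm : s.Perm s0 := List.mergeSort_perm _ _
  have hsub : s.Subperm l :=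
    (hs_perm.subperm.trans (toList_map_subperm a S)).trans hperm.symm.subperm
  have hsl : s.Sublist l := List.sublist_of_subperm_of_pairwise hsub hs_sort hsort
  have hlen : s.length = S.card := by
    rw [hsdef, List.length_mergeSort, hs0def, List.length_map, Finset.length_toList]
  have hsum : s.sum = ∑ i ∈ S, a i := by
    rw [hs_perm.sum_eq, hs0def, Finset.sum_map_toList]
  have h1 : ∑ i ∈ S, a i ≤ (l.take S.card).sum := by
    rw [← hsum, ← hlen]; exact sorted_sum_take_ge hsl hsort
  have hne : ∀ x ∈ l, 0 ≤ x := by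
    intro x hx
    obtain ⟨i, rfl⟩ := List.mem_ofFn.mp (hperm.subset hx)
    exact ha i
  have h2 : (l.take S.card).sum ≤ (l.take n).sum := by
    have hdec : n = S.card + (n - S.card) := by omega
    rw [hdec, List.take_add, List.sum_append]
    have : 0 ≤ ((l.drop S.card).take (n - S.card)).sum :=
      list_sum_nonneg fun x hx =>
        hne x (List.mem_of_mem_drop (List.mem_of_mem_take hx))
    linarith
  exact le_trans h1 h2

/-- Descent direction bounds under bounded perturbation of up to `n` of the `b`
training samples. -/
theorem descent_direction_bounds_bounded_perturbation
    (b n d : ℕ) (hn : n ≤ b)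
    (δ L U L' U' : Fin b → Fin d → ℝ)
    (hL : ∀ i j, L i j ≤ δ i j) (hU : ∀ i j, δ i j ≤ U i j)
    (hL' : ∀ i j, L' i j ≤ L i j) (hU' : ∀ i j, U i j ≤ U' i j)
    (δ' : Fin b → Fin d → ℝ)
    (P : Finset (Fin b)) (hP : P.card ≤ n)
    (hpert : ∀ i ∈ P, ∀ j, L' i j ≤ δ' i j ∧ δ' i j ≤ U' i j)
    (hfix : ∀ i ∉ P, δ' i = δ i) (j : Fin d) :
    (1 / (b : ℝ)) * (SEMin (fun i => L' i j - L i j) n + ∑ i, L i j) ≤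
        (1 / (b : ℝ)) * ∑ i, δ' i j ∧
      (1 / (b : ℝ)) * ∑ i, δ' i j ≤
        (1 / (b : ℝ)) * (SEMax (fun i => U' i j - U i j) n + ∑ i, U i j) := by
  classical
  have hb : (0:ℝ) ≤ 1 / (b : ℝ) := by positivity
  have hsplitδ' : ∑ i, δ' i j = ∑ i ∈ P, δ' i j + ∑ i ∈ Pᶜ, δ' i j :=
    (Finset.sum_add_sum_compl P _).symm
  constructor
  · apply mul_le_mul_of_nonneg_left _ hb
    have hmin : SEMin (fun i => L' i j - L i j) n ≤ ∑ i ∈ P, (L' i j - L i j) :=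
      SEMin_le_sum_subset _ (fun i => sub_nonpos.mpr (hL' i j)) P hP
    have hsplitL : ∑ i, L i j = ∑ i ∈ P, L i j + ∑ i ∈ Pᶜ, L i j :=
      (Finset.sum_add_sum_compl P _).symm
    have h1 : ∑ i ∈ P, L' i j ≤ ∑ i ∈ P, δ' i j :=
      Finset.sum_le_sum fun i hi => (hpert i hi j).1
    have h2 : ∑ i ∈ Pᶜ, L i j ≤ ∑ i ∈ Pᶜ, δ' i j :=
      Finset.sum_le_sum fun i hi => by
        rw [hfix i (Finset.mem_compl.mp hi)]; exact hL i j
    have hsub : ∑ i ∈ P, (L' i j - L i j) = ∑ i ∈ P, L' i j - ∑ i ∈ P, L i j :=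
      by rw [Finset.sum_sub_distrib]
    linarith
  · apply mul_le_mul_of_nonneg_left _ hb
    have hmax : ∑ i ∈ P, (U' i j - U i j) ≤ SEMax (fun i => U' i j - U i j) n :=
      sum_subset_le_SEMax _ (fun i => sub_nonneg.mpr (hU' i j)) P hP
    have hsplitU : ∑ i, U i j = ∑ i ∈ P, U i j + ∑ i ∈ Pᶜ, U i j :=
      (Finset.sum_add_sum_compl P _).symm
    have h1 : ∑ i ∈ P, δ' i j ≤ ∑ i ∈ P, U' i j :=
      Finset.sum_le_sum fun i hi => (hpert i hi j).2
    have h2 : ∑ i ∈ Pᶜ, δ' i j ≤ ∑ i ∈ Pᶜ, U i j :=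
      Finset.sum_le_sum fun i hi => by
        rw [hfix i (Finset.mem_compl.mp hi)]; exact hU i j
    have hsub : ∑ i ∈ P, (U' i j - U i j) = ∑ i ∈ P, U' i j - ∑ i ∈ P, U i j :=
      by rw [Finset.sum_sub_distrib]
    linarith
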